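/- Let a, c > 0 and b ∈ ℝ, and set β := b/√(ac). For all n, m ∈ ℕ, the bivariate Hermite polynomial Ĥ_{n,m} satisfies the partial differential equation 𝔇 Ĥ_{n,m} = (m + n) · Ĥ_{n,m}, where 𝔇 = (x∂x − ∂x²) + (y∂y − ∂y²) − 2β ∂x∂y. -/

import Mathlib

open MvPolynomial Finset

/-- The bivariate Hermite polynomial
`Ĥ_{n,m} = Σ_{k=0}^{min(n,m)} (−1)^k k! C(n,k) C(m,k) a^{(n−k)/2} b^k c^{(m−k)/2}
H_{n−k}(x) H_{m−k}(y)` in the variables `x = X 0`, `y = X 1`, where `H_j` is the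
probabilist's Hermite polynomial and the powers of `a`, `c` are real powers. -/
noncomputable def bivariateHermite (a b c : ℝ) (n m : ℕ) : MvPolynomial (Fin 2) ℝ :=
  ∑ k ∈ range (min n m + 1),
    C ((-1 : ℝ) ^ k * (k.factorial : ℝ) * (n.choose k : ℝ) * (m.choose k : ℝ) *
        a ^ (((n - k : ℕ) : ℝ) / 2) * b ^ k * c ^ (((m - k : ℕ) : ℝ) / 2)) *
      Polynomial.aeval (X 0) (Polynomial.hermite (n - k)) *
      Polynomial.aeval (X 1) (Polynomial.hermite (m - k))

section AuxHermitePDE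
open Polynomial

noncomputable def auxF (j : ℕ) : MvPolynomial (Fin 2) ℝ :=
  Polynomial.aeval (MvPolynomial.X 0) (Polynomial.hermite j)
noncomputable def auxG (j : ℕ) : MvPolynomial (Fin 2) ℝ :=
  Polynomial.aeval (MvPolynomial.X 1) (Polynomial.hermite j)
noncomputable def auxDF (j : ℕ) : MvPolynomial (Fin 2) ℝ :=
  Polynomial.aeval (MvPolynomial.X 0) (derivative (Polynomial.hermite j))
noncomputable def auxDG (j : ℕ) : MvPolynomial (Fin 2) ℝ :=
  Polynomial.aeval (MvPolynomial.X 1) (derivative (Polynomial.hermite j))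

lemma aux_pderiv_aeval_X (i j : Fin 2) (p : ℤ[X]) :
    pderiv i (Polynomial.aeval (MvPolynomial.X j : MvPolynomial (Fin 2) ℝ) p) =
      if j = i then Polynomial.aeval (MvPolynomial.X j) (derivative p) else 0 := by
  induction p using Polynomial.induction_on' with
  | add p q hp hq => rw [map_add, map_add, hp, hq]; split_ifs <;> simp
  | monomial n a =>
      simp only [Polynomial.aeval_monomial, derivative_monomial, pderiv_C_mul, pderiv_pow,
        pderiv_X, map_mul]
      split_ifs with h
      · subst h; simp [Polynomial.aeval_monomial]; ring
      · simp [Pi.single_apply, h]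

lemma auxF_p0 (j : ℕ) : pderiv 0 (auxF j) = auxDF j := by
  rw [auxF, auxDF, aux_pderiv_aeval_X, if_pos rfl]
lemma auxF_p1 (j : ℕ) : pderiv 1 (auxF j) = 0 := by
  rw [auxF, aux_pderiv_aeval_X, if_neg (by decide)]
lemma auxG_p1 (j : ℕ) : pderiv 1 (auxG j) = auxDG j := by
  rw [auxG, auxDG, aux_pderiv_aeval_X, if_pos rfl]
lemma auxG_p0 (j : ℕ) : pderiv 0 (auxG j) = 0 := by
  rw [auxG, aux_pderiv_aeval_X, if_neg (by decide)]
lemma auxDF_p1 (j : ℕ) : pderiv 1 (auxDF j) = 0 := by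
  rw [auxDF, aux_pderiv_aeval_X, if_neg (by decide)]
lemma auxDG_p0 (j : ℕ) : pderiv 0 (auxDG j) = 0 := by
  rw [auxDG, aux_pderiv_aeval_X, if_neg (by decide)]
lemma auxDF_zero : auxDF 0 = 0 := by simp [auxDF]
lemma auxDG_zero : auxDG 0 = 0 := by simp [auxDG]

lemma aux_derivative_hermite (n : ℕ) :
    derivative (Polynomial.hermite (n + 1)) = (n + 1 : ℤ[X]) * Polynomial.hermite n := by
  induction n with
  | zero => simp [Polynomial.hermite_one, Polynomial.hermite_zero]
  | succ n ih =>
      rw [Polynomial.hermite_succ (n + 1), derivative_sub, derivative_mul, derivative_X, ih,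
        derivative_mul]
      have hd : derivative ((n : ℤ[X]) + 1) = 0 := by simp
      have h := Polynomial.hermite_succ n
      push_cast
      linear_combination (-((n : ℤ[X]) + 1)) * h - hd * Polynomial.hermite n

lemma aux_ode (n : ℕ) :
    (Polynomial.X : ℤ[X]) * derivative (Polynomial.hermite n) -
      derivative (derivative (Polynomial.hermite n)) = (n : ℤ[X]) * Polynomial.hermite n := by
  cases n with
  | zero => simp [Polynomial.hermite_zero]
  | succ n =>
      rw [aux_derivative_hermite, derivative_mul]
      have hd : derivative ((n : ℤ[X]) + 1) = 0 := by simp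
      have h := Polynomial.hermite_succ n
      push_cast
      linear_combination (-((n : ℤ[X]) + 1)) * h - hd * Polynomial.hermite n

lemma auxDF_succ (j : ℕ) :
    auxDF (j + 1) = ((j : MvPolynomial (Fin 2) ℝ) + 1) * auxF j := by
  rw [auxDF, aux_derivative_hermite, map_mul, auxF]
  push_cast [map_add, map_natCast, map_one]
  ring

lemma auxDG_succ (j : ℕ) :
    auxDG (j + 1) = ((j : MvPolynomial (Fin 2) ℝ) + 1) * auxG j := by
  rw [auxDG, aux_derivative_hermite, map_mul, auxG]
  push_cast [map_add, map_natCast, map_one]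
  ring

lemma aux_odeF (j : ℕ) :
    MvPolynomial.X 0 * auxDF j - pderiv 0 (auxDF j)
      = (j : MvPolynomial (Fin 2) ℝ) * auxF j := by
  rw [auxDF, aux_pderiv_aeval_X, if_pos rfl]
  have := congrArg (Polynomial.aeval (MvPolynomial.X 0 : MvPolynomial (Fin 2) ℝ)) (aux_ode j)
  simpa [map_sub, map_mul, Polynomial.aeval_X, map_natCast, auxF, auxDF] using this

lemma aux_odeG (j : ℕ) :
    MvPolynomial.X 1 * auxDG j - pderiv 1 (auxDG j)
      = (j : MvPolynomial (Fin 2) ℝ) * auxG j := by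
  rw [auxDG, aux_pderiv_aeval_X, if_pos rfl]
  have := congrArg (Polynomial.aeval (MvPolynomial.X 1 : MvPolynomial (Fin 2) ℝ)) (aux_ode j)
  simpa [map_sub, map_mul, Polynomial.aeval_X, map_natCast, auxG, auxDG] using this

noncomputable def auxcoef (a b c : ℝ) (n m k : ℕ) : ℝ :=
  (-1 : ℝ) ^ k * (k.factorial : ℝ) * (n.choose k : ℝ) * (m.choose k : ℝ) *
    a ^ (((n - k : ℕ) : ℝ) / 2) * b ^ k * c ^ (((m - k : ℕ) : ℝ) / 2)

lemma aux_key (a b c : ℝ) (ha : 0 < a) (hc : 0 < c) (n m k : ℕ)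
    (hkn : k + 1 ≤ n) (hkm : k + 1 ≤ m) :
    2 * ((k + 1 : ℕ) : ℝ) * auxcoef a b c n m (k + 1) =
      -(2 * (b / Real.sqrt (a * c)) * ((n - k : ℕ) : ℝ) * ((m - k : ℕ) : ℝ) *
        auxcoef a b c n m k) := by
  unfold auxcoef
  have h1 : (n - k : ℕ) = (n - (k+1)) + 1 := by omega
  have h2 : (m - k : ℕ) = (m - (k+1)) + 1 := by omega
  have hnat : ((k+1) * ((k+1).factorial * (n.choose (k+1) * m.choose (k+1))) : ℕ)
      = k.factorial * ((n.choose k * (n - k)) * (m.choose k * (m - k))) := by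
    rw [Nat.factorial_succ, ← Nat.choose_succ_right_eq n k, ← Nat.choose_succ_right_eq m k]
    ring
  have ha2 : a ^ (((n - k : ℕ) : ℝ) / 2) = a ^ (((n - (k+1) : ℕ) : ℝ) / 2) * Real.sqrt a := by
    rw [h1, Real.sqrt_eq_rpow, ← Real.rpow_add ha]
    push_cast; ring_nf
  have hc2 : c ^ (((m - k : ℕ) : ℝ) / 2) = c ^ (((m - (k+1) : ℕ) : ℝ) / 2) * Real.sqrt c := by
    rw [h2, Real.sqrt_eq_rpow, ← Real.rpow_add hc]
    push_cast; ring_nf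
  have hs : Real.sqrt (a * c) = Real.sqrt a * Real.sqrt c := Real.sqrt_mul ha.le c
  have hsa : (0:ℝ) < Real.sqrt a := Real.sqrt_pos.2 ha
  have hsc : (0:ℝ) < Real.sqrt c := Real.sqrt_pos.2 hc
  have hnat' : ((k:ℝ)+1) * (((k+1).factorial : ℝ) * ((n.choose (k+1):ℝ) * (m.choose (k+1):ℝ)))
      = (k.factorial : ℝ) * (((n.choose k : ℝ) * ((n:ℝ) - k)) * ((m.choose k : ℝ) * ((m:ℝ) - k))) := by
    have := congrArg (Nat.cast : ℕ → ℝ) hnat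
    push_cast [Nat.cast_sub (by omega : k ≤ n), Nat.cast_sub (by omega : k ≤ m)] at this
    linarith [this]
  rw [ha2, hc2, hs]
  push_cast [Nat.cast_sub (by omega : k ≤ n), Nat.cast_sub (by omega : k ≤ m)]
  field_simp
  linear_combination (-(-1:ℝ)^k * b^(k+1)) * hnat'

noncomputable def auxT (a b c : ℝ) (n m k : ℕ) : MvPolynomial (Fin 2) ℝ :=
  MvPolynomial.C (auxcoef a b c n m k) * auxF (n - k) * auxG (m - k)

noncomputable def auxA (a b c : ℝ) (n m k : ℕ) : MvPolynomial (Fin 2) ℝ :=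
  2 * (k : MvPolynomial (Fin 2) ℝ) * MvPolynomial.C (auxcoef a b c n m k) *
    auxF (n - k) * auxG (m - k)

noncomputable def auxB (a b c β : ℝ) (n m k : ℕ) : MvPolynomial (Fin 2) ℝ :=
  2 * MvPolynomial.C β * MvPolynomial.C (auxcoef a b c n m k) * auxDF (n - k) * auxDG (m - k)

lemma aux_sumAB (a b c β : ℝ) (ha : 0 < a) (hc : 0 < c)
    (hβ : β = b / Real.sqrt (a * c)) (n m : ℕ) :
    ∑ k ∈ range (min n m + 1), (auxA a b c n m k + auxB a b c β n m k) = 0 := by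
  rw [Finset.sum_add_distrib,
    Finset.sum_range_succ' (fun k => auxA a b c n m k) (min n m),
    Finset.sum_range_succ (fun k => auxB a b c β n m k) (min n m)]
  have hA0 : auxA a b c n m 0 = 0 := by simp [auxA]
  have hBM : auxB a b c β n m (min n m) = 0 := by
    rcases le_total n m with h | h
    · rw [auxB, show min n m = n from min_eq_left h]
      simp [auxDF_zero]
    · rw [auxB, show min n m = m from min_eq_right h]
      simp [auxDG_zero]
  rw [hA0, hBM, add_zero, add_zero, ← Finset.sum_add_distrib]
  apply Finset.sum_eq_zero
  intro k hk
  rw [Finset.mem_range] at hk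
  have hkn : k + 1 ≤ n := le_trans hk (Nat.min_le_left n m)
  have hkm : k + 1 ≤ m := le_trans hk (Nat.min_le_right n m)
  have h1 : (n - k : ℕ) = (n - (k+1)) + 1 := by omega
  have h2 : (m - k : ℕ) = (m - (k+1)) + 1 := by omega
  have key := aux_key a b c ha hc n m k hkn hkm
  rw [← hβ] at key
  have keyC : (2 : MvPolynomial (Fin 2) ℝ) * ((k + 1 : ℕ) : MvPolynomial (Fin 2) ℝ) *
      MvPolynomial.C (auxcoef a b c n m (k+1)) =
      -(2 * MvPolynomial.C β * ((n - k : ℕ) : MvPolynomial (Fin 2) ℝ) *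
        ((m - k : ℕ) : MvPolynomial (Fin 2) ℝ) * MvPolynomial.C (auxcoef a b c n m k)) := by
    have := congrArg (MvPolynomial.C : ℝ →+* MvPolynomial (Fin 2) ℝ) key
    push_cast [map_mul, map_neg, map_ofNat, map_natCast] at this ⊢
    have hCk : MvPolynomial.C ((k:ℝ)+1) = ((k : MvPolynomial (Fin 2) ℝ) + 1) := by
      push_cast [map_add, map_natCast, map_one]; ring
    linear_combination this - 2 * MvPolynomial.C (auxcoef a b c n m (k+1)) * hCk
  have hc1 : ((n - k : ℕ) : MvPolynomial (Fin 2) ℝ) = ((n - (k+1) : ℕ) : MvPolynomial (Fin 2) ℝ) + 1 := by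
    rw [h1]; push_cast; ring
  have hc2 : ((m - k : ℕ) : MvPolynomial (Fin 2) ℝ) = ((m - (k+1) : ℕ) : MvPolynomial (Fin 2) ℝ) + 1 := by
    rw [h2]; push_cast; ring
  rw [auxA, auxB, h1, h2, auxDF_succ, auxDG_succ]
  rw [hc1, hc2] at keyC
  linear_combination (auxF (n - (k+1)) * auxG (m - (k+1))) * keyC

lemma aux_perk (a b c β : ℝ) (n m k : ℕ) (hkn : k ≤ n) (hkm : k ≤ m) :
    MvPolynomial.X 0 * pderiv 0 (auxT a b c n m k) -
        pderiv 0 (pderiv 0 (auxT a b c n m k)) +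
        MvPolynomial.X 1 * pderiv 1 (auxT a b c n m k) -
        pderiv 1 (pderiv 1 (auxT a b c n m k)) -
        MvPolynomial.C (2 * β) * pderiv 0 (pderiv 1 (auxT a b c n m k)) =
      MvPolynomial.C ((m + n : ℕ) : ℝ) * auxT a b c n m k -
        (auxA a b c n m k + auxB a b c β n m k) := by
  have p0 : pderiv 0 (auxT a b c n m k) =
      MvPolynomial.C (auxcoef a b c n m k) * auxDF (n - k) * auxG (m - k) := by
    simp [auxT, pderiv_mul, MvPolynomial.pderiv_C, auxF_p0, auxG_p0]; ring
  have p1 : pderiv 1 (auxT a b c n m k) =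
      MvPolynomial.C (auxcoef a b c n m k) * auxF (n - k) * auxDG (m - k) := by
    simp [auxT, pderiv_mul, MvPolynomial.pderiv_C, auxF_p1, auxG_p1]
  have p00 : pderiv 0 (MvPolynomial.C (auxcoef a b c n m k) * auxDF (n - k) * auxG (m - k)) =
      MvPolynomial.C (auxcoef a b c n m k) * pderiv 0 (auxDF (n - k)) * auxG (m - k) := by
    simp [pderiv_mul, MvPolynomial.pderiv_C, auxG_p0]; ring
  have p11 : pderiv 1 (MvPolynomial.C (auxcoef a b c n m k) * auxF (n - k) * auxDG (m - k)) =
      MvPolynomial.C (auxcoef a b c n m k) * auxF (n - k) * pderiv 1 (auxDG (m - k)) := by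
    simp [pderiv_mul, MvPolynomial.pderiv_C, auxF_p1]
  have p01 : pderiv 0 (MvPolynomial.C (auxcoef a b c n m k) * auxF (n - k) * auxDG (m - k)) =
      MvPolynomial.C (auxcoef a b c n m k) * auxDF (n - k) * auxDG (m - k) := by
    simp [pderiv_mul, MvPolynomial.pderiv_C, auxF_p0, auxDG_p0]; ring
  have odeF := aux_odeF (n - k)
  have odeG := aux_odeG (m - k)
  have hcast : ((n - k : ℕ) : MvPolynomial (Fin 2) ℝ) + ((m - k : ℕ) : MvPolynomial (Fin 2) ℝ)
      + 2 * (k : MvPolynomial (Fin 2) ℝ) = MvPolynomial.C ((m + n : ℕ) : ℝ) := by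
    rw [map_natCast]
    push_cast [Nat.cast_sub hkn, Nat.cast_sub hkm]
    ring
  have hC2β : (MvPolynomial.C (2 * β) : MvPolynomial (Fin 2) ℝ) = 2 * MvPolynomial.C β := by
    rw [map_mul, map_ofNat]
  rw [p0, p1, p00, p11, p01, auxT, auxA, auxB]
  linear_combination (MvPolynomial.C (auxcoef a b c n m k) * auxG (m - k)) * odeF +
    (MvPolynomial.C (auxcoef a b c n m k) * auxF (n - k)) * odeG +
    (MvPolynomial.C (auxcoef a b c n m k) * auxF (n - k) * auxG (m - k)) * hcast -
    (MvPolynomial.C (auxcoef a b c n m k) * auxDF (n - k) * auxDG (m - k)) * hC2β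

end AuxHermitePDE

/-- The bivariate Hermite polynomials satisfy the PDE `𝔇 Ĥ_{n,m} = (m+n)·Ĥ_{n,m}` for
`𝔇 = (x∂x − ∂x²) + (y∂y − ∂y²) − 2β ∂x∂y`, where `β = b/√(ac)`. -/
theorem bivariateHermite_pde (a b c β : ℝ) (ha : 0 < a) (hc : 0 < c)
    (hβ : β = b / Real.sqrt (a * c)) (n m : ℕ) :
    X 0 * pderiv 0 (bivariateHermite a b c n m) -
        pderiv 0 (pderiv 0 (bivariateHermite a b c n m)) +
        X 1 * pderiv 1 (bivariateHermite a b c n m) -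
        pderiv 1 (pderiv 1 (bivariateHermite a b c n m)) -
        C (2 * β) * pderiv 0 (pderiv 1 (bivariateHermite a b c n m)) =
      C ((m + n : ℕ) : ℝ) * bivariateHermite a b c n m := by
  have hbh : bivariateHermite a b c n m = ∑ k ∈ range (min n m + 1), auxT a b c n m k := rfl
  rw [hbh]
  have hsum : MvPolynomial.X 0 * pderiv 0 (∑ k ∈ range (min n m + 1), auxT a b c n m k) -
      pderiv 0 (pderiv 0 (∑ k ∈ range (min n m + 1), auxT a b c n m k)) +
      MvPolynomial.X 1 * pderiv 1 (∑ k ∈ range (min n m + 1), auxT a b c n m k) -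
      pderiv 1 (pderiv 1 (∑ k ∈ range (min n m + 1), auxT a b c n m k)) -
      MvPolynomial.C (2 * β) * pderiv 0 (pderiv 1 (∑ k ∈ range (min n m + 1), auxT a b c n m k)) =
      ∑ k ∈ range (min n m + 1),
        (MvPolynomial.X 0 * pderiv 0 (auxT a b c n m k) -
          pderiv 0 (pderiv 0 (auxT a b c n m k)) +
          MvPolynomial.X 1 * pderiv 1 (auxT a b c n m k) -
          pderiv 1 (pderiv 1 (auxT a b c n m k)) -
          MvPolynomial.C (2 * β) * pderiv 0 (pderiv 1 (auxT a b c n m k))) := by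
    simp only [map_sum, Finset.mul_sum, Finset.sum_sub_distrib, Finset.sum_add_distrib]
  rw [hsum]
  have hcongr : ∀ k ∈ range (min n m + 1),
      MvPolynomial.X 0 * pderiv 0 (auxT a b c n m k) -
        pderiv 0 (pderiv 0 (auxT a b c n m k)) +
        MvPolynomial.X 1 * pderiv 1 (auxT a b c n m k) -
        pderiv 1 (pderiv 1 (auxT a b c n m k)) -
        MvPolynomial.C (2 * β) * pderiv 0 (pderiv 1 (auxT a b c n m k)) =
      MvPolynomial.C ((m + n : ℕ) : ℝ) * auxT a b c n m k -
        (auxA a b c n m k + auxB a b c β n m k) := by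
    intro k hk
    rw [Finset.mem_range] at hk
    exact aux_perk a b c β n m k
      (by have := Nat.min_le_left n m; omega) (by have := Nat.min_le_right n m; omega)
  rw [Finset.sum_congr rfl hcongr, Finset.sum_sub_distrib,
    aux_sumAB a b c β ha hc hβ n m, sub_zero, ← Finset.mul_sum]
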